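/- Let A be a real n×n matrix and B a real n×p matrix, and let X₋ ∈ ℝ^{n×T}, U₋ ∈ ℝ^{p×T} be data matrices with X₊ := A·X₋ + B·U₋. Suppose Γ ∈ ℝ^{T×n} is such that S := X₋Γ is symmetric, S - Iₙ is positive semidefinite, and the 2n×2n block matrix [[S - Iₙ, X₊Γ], [ΓᵀX₊ᵀ, S]] is positive semidefinite. Then S is invertible, A + B·(U₋Γ S⁻¹) = X₊Γ S⁻¹, and the matrix A + B·(U₋Γ S⁻¹) is Schur stable. -/

import Mathlib

open Matrix

noncomputable section

/-- A complex square matrix is Schur stable if every eigenvalue has modulus `< 1`. -/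
def SchurStable {m : Type*} [Fintype m] [DecidableEq m] (M : Matrix m m ℂ) : Prop :=
  ∀ μ ∈ spectrum ℂ M, ‖μ‖ < 1

/-- A real square matrix is Schur stable if every complex eigenvalue has modulus `< 1`. -/
def SchurStableR {m : Type*} [Fintype m] [DecidableEq m] (M : Matrix m m ℝ) : Prop :=
  SchurStable (M.map Complex.ofReal)

open ComplexOrder

lemma map_ofReal_mul {a b c : ℕ} (P : Matrix (Fin a) (Fin b) ℝ) (Q : Matrix (Fin b) (Fin c) ℝ) :
    (P * Q).map Complex.ofReal = P.map Complex.ofReal * Q.map Complex.ofReal := by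
  ext i j
  simp [Matrix.mul_apply, Matrix.map_apply]

lemma map_ofReal_sub {a b : ℕ} (P Q : Matrix (Fin a) (Fin b) ℝ) :
    (P - Q).map Complex.ofReal = P.map Complex.ofReal - Q.map Complex.ofReal := by
  ext i j
  simp [Matrix.map_apply]

lemma map_ofReal_conjTranspose {a b : ℕ} (P : Matrix (Fin a) (Fin b) ℝ) :
    (P.map Complex.ofReal)ᴴ = Pᵀ.map Complex.ofReal := by
  ext i j
  simp [Matrix.conjTranspose_apply, Matrix.map_apply, Complex.conj_ofReal]

/-- Complexification preserves positive semidefiniteness. -/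
lemma posSemidef_map_ofReal {k : ℕ} {N : Matrix (Fin k) (Fin k) ℝ} (h : N.PosSemidef) :
    (N.map Complex.ofReal).PosSemidef := by
  obtain ⟨C, rfl⟩ : ∃ C : Matrix (Fin k) (Fin k) ℝ, N = Cᴴ * C := by
    open scoped MatrixOrder Matrix.Norms.L2Operator in
    obtain ⟨B, rfl⟩ := CStarAlgebra.nonneg_iff_eq_star_mul_self.mp h.nonneg
    exact ⟨B, rfl⟩
  have h1 : (Cᴴ * C).map Complex.ofReal
      = (C.map Complex.ofReal)ᴴ * (C.map Complex.ofReal) := by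
    rw [map_ofReal_mul, map_ofReal_conjTranspose]
    have hct : Cᴴ.map Complex.ofReal = Cᵀ.map Complex.ofReal := by
      ext i j
      simp [Matrix.conjTranspose_apply, Matrix.map_apply]
    rw [hct]
  rw [h1]
  exact Matrix.posSemidef_conjTranspose_mul_self _

/-- data-driven stabilization from noiseless data.  Any `Γ` feasible for the
LMI constraints of the data-driven LQR program yields a stabilizing feedback gain
`K = U₋ Γ (X₋ Γ)⁻¹` for the unknown system `(A, B)` generating the data. -/
theorem noiseless_data_driven_stabilization {n p T : ℕ}
    (A : Matrix (Fin n) (Fin n) ℝ) (B : Matrix (Fin n) (Fin p) ℝ)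
    (Xminus : Matrix (Fin n) (Fin T) ℝ) (Uminus : Matrix (Fin p) (Fin T) ℝ)
    (Xplus : Matrix (Fin n) (Fin T) ℝ) (hXplus : Xplus = A * Xminus + B * Uminus)
    (Γ : Matrix (Fin T) (Fin n) ℝ)
    (S : Matrix (Fin n) (Fin n) ℝ) (hS : S = Xminus * Γ)
    (hSsymm : S.IsSymm)
    (hSgeI : (S - 1).PosSemidef)
    (hblock : (Matrix.fromBlocks (S - 1) (Xplus * Γ) (Γᵀ * Xplusᵀ) S).PosSemidef) :
    IsUnit S ∧
      A + B * (Uminus * Γ * S⁻¹) = Xplus * Γ * S⁻¹ ∧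
      SchurStableR (A + B * (Uminus * Γ * S⁻¹)) := by
  -- S is positive definite
  have hSpd : S.PosDef := by
    have := Matrix.PosDef.posSemidef_add hSgeI Matrix.PosDef.one
    simpa using this
  have hdet : IsUnit S.det := hSpd.det_pos.ne'.isUnit
  have hUnit : IsUnit S := (Matrix.isUnit_iff_isUnit_det S).mpr hdet
  -- the closed-loop identity
  have h1 : Xplus * Γ = A * S + B * (Uminus * Γ) := by
    rw [hXplus, Matrix.add_mul, hS, Matrix.mul_assoc, Matrix.mul_assoc]
  have heq : A + B * (Uminus * Γ * S⁻¹) = Xplus * Γ * S⁻¹ := by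
    rw [h1, Matrix.add_mul, Matrix.mul_assoc A S S⁻¹, Matrix.mul_nonsing_inv S hdet,
      Matrix.mul_one]
    simp [Matrix.mul_assoc]
  refine ⟨hUnit, heq, ?_⟩
  rw [SchurStableR, heq]
  set M : Matrix (Fin n) (Fin n) ℝ := Xplus * Γ * S⁻¹ with hM
  -- Schur complement
  letI := S.invertibleOfIsUnitDet hdet
  have hH : Γᵀ * Xplusᵀ = (Xplus * Γ)ᴴ := by
    rw [← Matrix.transpose_mul]
    ext i j
    simp [Matrix.conjTranspose_apply]
  rw [hH] at hblock
  have hschur : ((S - 1) - (Xplus * Γ) * S⁻¹ * (Xplus * Γ)ᴴ).PosSemidef :=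
    (Matrix.PosDef.fromBlocks₂₂ _ _ hSpd).mp hblock
  -- rewrite the Schur complement as the Lyapunov-type expression
  have hMT : Mᵀ = S⁻¹ * (Xplus * Γ)ᵀ := by
    rw [hM, Matrix.transpose_mul, Matrix.transpose_nonsing_inv, hSsymm.eq]
  have hNid : (S - 1) - (Xplus * Γ) * S⁻¹ * (Xplus * Γ)ᴴ = S - M * S * Mᵀ - 1 := by
    have hC : (Xplus * Γ)ᴴ = (Xplus * Γ)ᵀ := by
      ext i j; simp [Matrix.conjTranspose_apply]
    have hss : M * S = Xplus * Γ := by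
      rw [hM, Matrix.mul_assoc, Matrix.nonsing_inv_mul S hdet, Matrix.mul_one]
    have hmsm : M * S * Mᵀ = Xplus * Γ * S⁻¹ * (Xplus * Γ)ᵀ := by
      rw [hss, hMT, ← Matrix.mul_assoc]
    rw [hC, hmsm]
    abel
  rw [hNid] at hschur
  -- complexify
  set f := Complex.ofReal with hf
  set Mc : Matrix (Fin n) (Fin n) ℂ := M.map f with hMc
  set Sc : Matrix (Fin n) (Fin n) ℂ := S.map f with hSc
  have hone : (1 : Matrix (Fin n) (Fin n) ℝ).map f = 1 :=
    Matrix.map_one _ Complex.ofReal_zero Complex.ofReal_one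
  have hmapC : (S - M * S * Mᵀ - 1).map f = Sc - Mc * Sc * Mcᵀ - 1 := by
    rw [map_ofReal_sub, map_ofReal_sub, hone, map_ofReal_mul, map_ofReal_mul,
      Matrix.transpose_map]
  have hCpsd : (Sc - Mc * Sc * Mcᵀ - 1).PosSemidef := by
    rw [← hmapC]; exact posSemidef_map_ofReal hschur
  have hSgeIc : (Sc - 1).PosSemidef := by
    have h6 : (S - 1).map f = Sc - 1 := by rw [map_ofReal_sub, hone]
    rw [← h6]; exact posSemidef_map_ofReal hSgeI
  -- stability
  intro μ hμ
  -- obtain an eigenvector of `Mcᵀ`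
  have hdet0 : (μ • 1 - Mc).det = 0 := by
    have hnu := spectrum.mem_iff.mp hμ
    rw [Matrix.isUnit_iff_isUnit_det] at hnu
    have halg : algebraMap ℂ (Matrix (Fin n) (Fin n) ℂ) μ = μ • 1 := by
      simp [Algebra.algebraMap_eq_smul_one]
    rw [halg] at hnu
    exact not_not.mp fun h => hnu (isUnit_iff_ne_zero.mpr h)
  have hdetT : (μ • 1 - Mcᵀ).det = 0 := by
    have h7 : μ • 1 - Mcᵀ = (μ • (1 : Matrix (Fin n) (Fin n) ℂ) - Mc)ᵀ := by
      rw [Matrix.transpose_sub, Matrix.transpose_smul, Matrix.transpose_one]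
    rw [h7, Matrix.det_transpose]
    exact hdet0
  obtain ⟨v, hv0, hv⟩ := Matrix.exists_mulVec_eq_zero_iff.mpr hdetT
  have heig : Mcᵀ *ᵥ v = μ • v := by
    rw [Matrix.sub_mulVec, Matrix.smul_mulVec, Matrix.one_mulVec, sub_eq_zero] at hv
    exact hv.symm
  -- Mc is a real matrix, so its conjugate transpose is its transpose
  have hMH : Mcᴴ = Mcᵀ := by
    ext i j
    simp [Matrix.conjTranspose_apply, Matrix.map_apply, hMc, hf, Complex.conj_ofReal]
  -- quadratic forms
  set t : ℂ := star v ⬝ᵥ v with ht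
  set s : ℂ := star v ⬝ᵥ (Sc *ᵥ v) with hs
  have htpos : 0 < t := by
    rw [ht]
    exact Matrix.dotProduct_star_self_pos_iff.mpr hv0
  have h2 : (Mc * Sc * Mcᵀ) *ᵥ v = Mc *ᵥ (μ • (Sc *ᵥ v)) := by
    rw [← Matrix.mulVec_mulVec, ← Matrix.mulVec_mulVec, heig, Matrix.mulVec_smul]
  have hq : star v ⬝ᵥ ((Mc * Sc * Mcᵀ) *ᵥ v) = ((‖μ‖ ^ 2 : ℝ) : ℂ) * s := by
    have hvm : star v ᵥ* Mc = star (μ • v) := by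
      have h3 : star (Mcᴴ *ᵥ v) = star v ᵥ* Mcᴴᴴ := Matrix.star_mulVec Mcᴴ v
      rw [Matrix.conjTranspose_conjTranspose, hMH, heig] at h3
      exact h3.symm
    have hnorm : star μ * μ = ((‖μ‖ ^ 2 : ℝ) : ℂ) := by
      rw [show (star μ : ℂ) = (starRingEnd ℂ) μ from rfl, mul_comm, Complex.mul_conj]
      norm_cast
      rw [Complex.normSq_eq_norm_sq]
    rw [h2, Matrix.dotProduct_mulVec, hvm, star_smul, smul_dotProduct, dotProduct_smul,
      smul_eq_mul, smul_eq_mul, ← mul_assoc, hnorm]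
  -- put the two semidefiniteness facts together
  have hd1 : (0 : ℂ) ≤ s - t := by
    have h4 := hSgeIc.dotProduct_mulVec_nonneg v
    rwa [Matrix.sub_mulVec, Matrix.one_mulVec, dotProduct_sub] at h4
  have hd2 : (0 : ℂ) ≤ s - ((‖μ‖ ^ 2 : ℝ) : ℂ) * s - t := by
    have h5 := hCpsd.dotProduct_mulVec_nonneg v
    rwa [Matrix.sub_mulVec, Matrix.sub_mulVec, Matrix.one_mulVec, dotProduct_sub,
      dotProduct_sub, hq] at h5
  -- pass to real parts
  have hbre : 0 < t.re := (Complex.lt_def.mp htpos).1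
  have h1re : 0 ≤ s.re - t.re := by
    have := (Complex.le_def.mp hd1).1
    simpa using this
  have h2re : 0 ≤ s.re - ‖μ‖ ^ 2 * s.re - t.re := by
    have h := (Complex.le_def.mp hd2).1
    rw [Complex.zero_re, Complex.sub_re, Complex.sub_re, Complex.mul_re, Complex.ofReal_re,
      Complex.ofReal_im, zero_mul, sub_zero] at h
    exact h
  nlinarith [norm_nonneg μ, sq_nonneg (‖μ‖ - 1), sq_nonneg (‖μ‖ + 1)]
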